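/- Let F be a linear functional on n×n real matrices maximized over SO(n) at R₀, and let W be skew-symmetric with F(R₀W²) = 0. Then R₀e^{tW} also maximizes F over SO(n), for every t ∈ ℝ. -/

import Mathlib

open Matrix
noncomputable section

def SO (n : ℕ) : Set (Matrix (Fin n) (Fin n) ℝ) :=
  {R | Rᵀ * R = 1 ∧ R.det = 1}

namespace GeodesicAux

variable {n : ℕ}

lemma SO_mul {R S : Matrix (Fin n) (Fin n) ℝ} (hR : R ∈ SO n) (hS : S ∈ SO n) :
    R * S ∈ SO n := by
  obtain ⟨hR1, hR2⟩ := hR; obtain ⟨hS1, hS2⟩ := hS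
  constructor
  · rw [transpose_mul, mul_assoc, ← mul_assoc Rᵀ, hR1, one_mul, hS1]
  · rw [det_mul, hR2, hS2, one_mul]

lemma exp_skew_mem_SO {W : Matrix (Fin n) (Fin n) ℝ} (hW : Wᵀ = -W) :
    NormedSpace.exp W ∈ SO n := by
  have horth : (NormedSpace.exp W)ᵀ * NormedSpace.exp W = 1 := by
    rw [← Matrix.exp_transpose, hW,
      ← Matrix.exp_add_of_commute _ _ (Commute.neg_left (Commute.refl W)),
      neg_add_cancel, NormedSpace.exp_zero]
  refine ⟨horth, ?_⟩
  have hsq : (NormedSpace.exp W).det ^ 2 = 1 := by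
    have := congrArg Matrix.det horth
    rwa [det_mul, det_transpose, ← sq, det_one] at this
  have hpos : 0 ≤ (NormedSpace.exp W).det := by
    have : NormedSpace.exp W
        = NormedSpace.exp ((1/2 : ℝ) • W) * NormedSpace.exp ((1/2 : ℝ) • W) := by
      rw [← Matrix.exp_add_of_commute _ _ (Commute.refl _)]
      congr 1
      module
    rw [this, det_mul]
    exact mul_self_nonneg _
  nlinarith [hsq, hpos]

lemma stdBasis_transpose (i j : Fin n) :
    (Matrix.single i j (1:ℝ))ᵀ = Matrix.single j i 1 := by
  ext a b; simp [Matrix.single, and_comm]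

def gE (i j : Fin n) : Matrix (Fin n) (Fin n) ℝ :=
  Matrix.single i j 1 - Matrix.single j i 1

def gP (i j : Fin n) : Matrix (Fin n) (Fin n) ℝ :=
  Matrix.single i i 1 + Matrix.single j j 1

section Givens
variable (i j : Fin n)

lemma gE_mul_gE (hij : i ≠ j) : gE i j * gE i j = -gP i j := by
  have h1 : j ≠ i := hij.symm
  simp [gE, gP, sub_mul, mul_sub, hij, h1]
  abel

lemma gE_mul_gP (hij : i ≠ j) : gE i j * gP i j = gE i j := by
  have h1 : j ≠ i := hij.symm
  simp [gE, gP, sub_mul, mul_add, hij, h1]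
  abel

lemma gP_mul_gE (hij : i ≠ j) : gP i j * gE i j = gE i j := by
  have h1 : j ≠ i := hij.symm
  simp [gE, gP, add_mul, mul_sub, hij, h1]

lemma gP_mul_gP (hij : i ≠ j) : gP i j * gP i j = gP i j := by
  have h1 : j ≠ i := hij.symm
  simp [gP, add_mul, mul_add, hij, h1]

lemma gE_transpose : (gE i j)ᵀ = -gE i j := by
  simp [gE, transpose_sub, stdBasis_transpose]

lemma gP_transpose : (gP i j)ᵀ = gP i j := by
  simp [gP, transpose_add, stdBasis_transpose]

noncomputable def givens (i j : Fin n) (θ : ℝ) : Matrix (Fin n) (Fin n) ℝ :=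
  1 + Real.sin θ • gE i j + (Real.cos θ - 1) • gP i j

lemma givens_mul (hij : i ≠ j) (a b : ℝ) :
    givens i j a * givens i j b = givens i j (a + b) := by
  simp only [givens, mul_add, add_mul, one_mul, mul_one, smul_mul_assoc, mul_smul_comm,
    gE_mul_gE i j hij, gE_mul_gP i j hij, gP_mul_gE i j hij, gP_mul_gP i j hij,
    smul_neg, smul_smul]
  rw [Real.sin_add, Real.cos_add]
  module

lemma givens_transpose (θ : ℝ) : (givens i j θ)ᵀ = givens i j (-θ) := by
  simp [givens, transpose_add, transpose_smul, gE_transpose, gP_transpose]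

lemma givens_zero : givens i j 0 = 1 := by
  simp [givens]

lemma givens_mem_SO (hij : i ≠ j) (θ : ℝ) : givens i j θ ∈ SO n := by
  have horth : (givens i j θ)ᵀ * givens i j θ = 1 := by
    rw [givens_transpose, givens_mul i j hij, neg_add_cancel, givens_zero]
  refine ⟨horth, ?_⟩
  have hsq : (givens i j θ).det ^ 2 = 1 := by
    have := congrArg Matrix.det horth
    rwa [det_mul, det_transpose, ← sq, det_one] at this
  have hpos : 0 ≤ (givens i j θ).det := by
    have : givens i j θ = givens i j (θ/2) * givens i j (θ/2) := by
      rw [givens_mul i j hij, add_halves]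
    rw [this, det_mul]
    exact mul_self_nonneg _
  nlinarith [hsq, hpos]

end Givens

lemma sin_coeff_zero (a b : ℝ) (h : ∀ θ : ℝ, 0 ≤ b * (1 - Real.cos θ) - a * Real.sin θ) :
    a = 0 := by
  set g : ℝ → ℝ := fun θ => b * (1 - Real.cos θ) - a * Real.sin θ with hg
  have hmin : IsLocalMin g 0 := by
    apply IsMinOn.isLocalMin (s := Set.univ)
    · intro x _
      simp only [hg, Set.mem_setOf_eq]
      simpa using h x
    · exact Filter.univ_mem
  have hd : HasDerivAt g (b * Real.sin 0 - a * Real.cos 0) 0 := by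
    have hc : HasDerivAt (fun θ : ℝ => 1 - Real.cos θ) (Real.sin 0) 0 := by
      simpa using (Real.hasDerivAt_cos 0).const_sub 1
    exact (hc.const_mul b).sub ((Real.hasDerivAt_sin 0).const_mul a)
  have := hmin.hasDerivAt_eq_zero hd
  simpa using this

lemma trace_mul_stdBasis (A : Matrix (Fin n) (Fin n) ℝ) (i j : Fin n) :
    trace (A * Matrix.single i j (1:ℝ)) = A j i := by
  simp [trace, Matrix.mul_apply, Matrix.single, diag, ite_and,
    Finset.sum_ite_eq, Finset.sum_ite_eq']

lemma F_eq_trace (F : Matrix (Fin n) (Fin n) ℝ →ₗ[ℝ] ℝ) (R₀ : Matrix (Fin n) (Fin n) ℝ)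
    (A : Matrix (Fin n) (Fin n) ℝ) :
    F (R₀ * A) = trace ((Matrix.of fun i k => F (R₀ * Matrix.single k i 1)) * A) := by
  have hA : R₀ * A = ∑ i : Fin n, ∑ j : Fin n, A i j • (R₀ * Matrix.single i j 1) := by
    conv_lhs => rw [matrix_eq_sum_single A]
    rw [Finset.mul_sum]
    refine Finset.sum_congr rfl fun i _ => ?_
    rw [Finset.mul_sum]
    refine Finset.sum_congr rfl fun j _ => ?_
    rw [← mul_smul_comm, smul_single, smul_eq_mul, mul_one]
  rw [hA, map_sum]
  simp only [map_sum, _root_.map_smul, smul_eq_mul, Matrix.trace, Matrix.diag,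
    Matrix.mul_apply, Matrix.of_apply]
  rw [Finset.sum_comm]
  refine Finset.sum_congr rfl fun j _ => ?_
  exact Finset.sum_congr rfl fun i _ => mul_comm _ _

lemma F_exp (Φ : Matrix (Fin n) (Fin n) ℝ →ₗ[ℝ] ℝ) (W : Matrix (Fin n) (Fin n) ℝ)
    (h0 : ∀ k : ℕ, 1 ≤ k → Φ (W ^ k) = 0) (t : ℝ) :
    Φ (NormedSpace.exp (t • W)) = Φ 1 := by
  letI : SeminormedRing (Matrix (Fin n) (Fin n) ℝ) := Matrix.linftyOpSemiNormedRing
  letI : NormedRing (Matrix (Fin n) (Fin n) ℝ) := Matrix.linftyOpNormedRing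
  letI : NormedAlgebra ℝ (Matrix (Fin n) (Fin n) ℝ) := Matrix.linftyOpNormedAlgebra
  have hcont : Continuous Φ := Φ.continuous_of_finiteDimensional
  have hsum : Summable fun k : ℕ => ((Nat.factorial k : ℝ))⁻¹ • (t • W) ^ k :=
    NormedSpace.expSeries_summable' (𝕂 := ℝ) (t • W)
  have hmap : Φ (NormedSpace.exp (t • W))
      = ∑' k : ℕ, Φ (((Nat.factorial k : ℝ))⁻¹ • (t • W) ^ k) := by
    rw [NormedSpace.exp_eq_tsum (𝕂 := ℝ)]
    exact ((hsum.hasSum.map Φ.toAddMonoidHom hcont).tsum_eq).symm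
  rw [hmap]
  rw [tsum_eq_single 0]
  · simp
  · intro k hk
    have hk1 : 1 ≤ k := Nat.one_le_iff_ne_zero.mpr hk
    rw [smul_pow, _root_.map_smul, _root_.map_smul, h0 k hk1]
    simp



section Conj
variable {Q : Matrix (Fin n) (Fin n) ℝ}

lemma conj_cancel (hQ1 : Qᵀ * Q = 1) (X : Matrix (Fin n) (Fin n) ℝ) :
    Qᵀ * (Q * X) = X := by
  rw [← Matrix.mul_assoc, hQ1, one_mul]

lemma conj_mul (hQ1 : Qᵀ * Q = 1) (X Y : Matrix (Fin n) (Fin n) ℝ) :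
    (Q * X * Qᵀ) * (Q * Y * Qᵀ) = Q * (X * Y) * Qᵀ := by
  simp only [Matrix.mul_assoc]
  rw [conj_cancel hQ1 (Y * Qᵀ)]

lemma conj_trace (hQ1 : Qᵀ * Q = 1) (X : Matrix (Fin n) (Fin n) ℝ) :
    trace (Q * X * Qᵀ) = trace X := by
  rw [trace_mul_comm, ← Matrix.mul_assoc, hQ1, one_mul]

lemma conj_mem_SO (hQ1 : Qᵀ * Q = 1) (hQ2 : Q * Qᵀ = 1)
    {B : Matrix (Fin n) (Fin n) ℝ} (hB : Bᵀ * B = 1) (hBd : B.det = 1) :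
    Q * B * Qᵀ ∈ SO n := by
  constructor
  · have ht : (Q * B * Qᵀ)ᵀ = Q * Bᵀ * Qᵀ := by
      rw [transpose_mul, transpose_mul, transpose_transpose, Matrix.mul_assoc]
    rw [ht, conj_mul hQ1, hB, mul_one, hQ2]
  · have h : Q.det * Qᵀ.det = 1 := by rw [← det_mul, hQ2, det_one]
    rw [det_mul, det_mul, hBd, mul_one, h]

end Conj

end GeodesicAux

open GeodesicAux

/-- If `R₀` maximizes `F` over `SO(n)` and `W` is skew-symmetric with `F(R₀W²) = 0`,
then `R₀ e^{tW}` also maximizes `F` over `SO(n)` for every `t ∈ ℝ`. -/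
theorem geodesic_of_maximizers (n : ℕ)
    (F : Matrix (Fin n) (Fin n) ℝ →ₗ[ℝ] ℝ)
    (R₀ : Matrix (Fin n) (Fin n) ℝ) (hR₀ : R₀ ∈ SO n)
    (hmax : ∀ R ∈ SO n, F R ≤ F R₀)
    (W : Matrix (Fin n) (Fin n) ℝ) (hW : Wᵀ = -W)
    (hFW : F (R₀ * (W * W)) = 0) :
    ∀ t : ℝ, R₀ * NormedSpace.exp (t • W) ∈ SO n ∧
      ∀ R ∈ SO n, F R ≤ F (R₀ * NormedSpace.exp (t • W)) := by
  classical
  set M : Matrix (Fin n) (Fin n) ℝ :=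
    Matrix.of fun i k => F (R₀ * Matrix.single k i 1) with hMdef
  have hTr : ∀ A, F (R₀ * A) = trace (M * A) := fun A => F_eq_trace F R₀ A
  have hFR₀ : F R₀ = trace M := by
    have := hTr 1
    rwa [mul_one, mul_one] at this
  have hMG : ∀ R ∈ SO n, trace (M * R) ≤ trace M := by
    intro R hR
    rw [← hTr R, ← hFR₀]
    exact hmax _ (SO_mul hR₀ hR)
  -- M is symmetric
  have hsymm : Mᵀ = M := by
    ext i j
    rw [transpose_apply]
    rcases eq_or_ne i j with rfl | hij
    · rfl
    have key : ∀ θ : ℝ, 0 ≤ trace (M * gP j i) * (1 - Real.cos θ)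
        - trace (M * gE j i) * Real.sin θ := by
      intro θ
      have h := hMG _ (givens_mem_SO j i hij.symm θ)
      rw [givens, mul_add, mul_add, mul_one, mul_smul_comm, mul_smul_comm,
        trace_add, trace_add, trace_smul, trace_smul] at h
      simp only [smul_eq_mul] at h
      nlinarith [h]
    have h0 := sin_coeff_zero _ _ key
    rw [gE, mul_sub, trace_sub, trace_mul_stdBasis, trace_mul_stdBasis, sub_eq_zero] at h0
    exact h0.symm
  have hherm : M.IsHermitian := by
    rwa [Matrix.IsHermitian, conjTranspose_eq_transpose_of_trivial]
  set Q : Matrix (Fin n) (Fin n) ℝ := (hherm.eigenvectorUnitary : Matrix (Fin n) (Fin n) ℝ)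
    with hQdef
  set μ : Fin n → ℝ := hherm.eigenvalues with hμdef
  have hQ1 : Qᵀ * Q = 1 := by
    rw [hQdef, ← conjTranspose_eq_transpose_of_trivial]
    exact mem_unitaryGroup_iff'.mp hherm.eigenvectorUnitary.2
  have hQ2 : Q * Qᵀ = 1 := mul_eq_one_comm.mp hQ1
  have hspec : M = Q * diagonal μ * Qᵀ := by
    have := hherm.spectral_theorem
    rw [hQdef, hμdef, ← conjTranspose_eq_transpose_of_trivial]
    simpa [Matrix.star_eq_conjTranspose] using this
  -- pair inequality
  have hpair : ∀ i j : Fin n, i ≠ j → 0 ≤ μ i + μ j := by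
    intro i j hij
    set d : Fin n → ℝ := fun k => if k ∈ ({i, j} : Finset (Fin n)) then -1 else 1 with hddef
    have hd2 : (diagonal d)ᵀ * diagonal d = 1 := by
      rw [diagonal_transpose, diagonal_mul_diagonal]
      have h : ∀ k, d k * d k = 1 := by
        intro k; rw [hddef]; dsimp only; split_ifs <;> norm_num
      rw [show (fun k => d k * d k) = fun _ => (1:ℝ) from funext h, diagonal_one]
    have hdet : (diagonal d).det = 1 := by
      rw [det_diagonal, ← Finset.prod_mul_prod_compl ({i, j} : Finset (Fin n)) d]
      have h1 : ∏ k ∈ ({i, j} : Finset (Fin n)), d k = 1 := by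
        rw [Finset.prod_pair hij, hddef]
        simp
      have h2 : ∏ k ∈ ({i, j} : Finset (Fin n))ᶜ, d k = 1 := by
        refine Finset.prod_eq_one fun k hk => ?_
        rw [Finset.mem_compl] at hk
        rw [hddef]; dsimp only; rw [if_neg hk]
      rw [h1, h2, one_mul]
    have hle := hMG _ (conj_mem_SO hQ1 hQ2 hd2 hdet)
    rw [hspec, conj_mul hQ1, conj_trace hQ1, conj_trace hQ1, diagonal_mul_diagonal,
      trace_diagonal, trace_diagonal] at hle
    have hsplit : ∑ k, μ k - ∑ k, μ k * d k = 2 * μ i + 2 * μ j := by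
      rw [← Finset.sum_sub_distrib]
      have h : ∀ k : Fin n, μ k - μ k * d k
          = if k ∈ ({i, j} : Finset (Fin n)) then 2 * μ k else 0 := by
        intro k
        rw [hddef]; dsimp only; split_ifs <;> ring
      rw [Finset.sum_congr rfl fun k _ => h k, Finset.sum_ite_mem,
        Finset.univ_inter, Finset.sum_pair hij]
    linarith [hle, hsplit]
  -- skew in rotated frame
  set S : Matrix (Fin n) (Fin n) ℝ := Qᵀ * W * Q with hSdef
  have hWQ : W = Q * S * Qᵀ := by
    rw [hSdef]
    conv_lhs => rw [show W = (Q * Qᵀ) * W * (Q * Qᵀ) from by rw [hQ2, one_mul, mul_one]]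
    simp only [Matrix.mul_assoc]
  have hSskew : Sᵀ = -S := by
    rw [hSdef, transpose_mul, transpose_mul, transpose_transpose, hW]
    simp [Matrix.neg_mul, Matrix.mul_neg, Matrix.mul_assoc]
  have hSdiag : ∀ k, S k k = 0 := by
    intro k
    have h : Sᵀ k k = -S k k := by rw [hSskew]; rfl
    rw [transpose_apply] at h
    linarith
  have hSanti : ∀ k l, S l k = -S k l := by
    intro k l
    have h : Sᵀ k l = -S k l := by rw [hSskew]; rfl
    rwa [transpose_apply] at h
  -- the vanishing second-order sum
  have hzero : ∑ k, ∑ l, (μ k + μ l) * S k l ^ 2 = 0 := by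
    have htr0 : trace (diagonal μ * (S * S)) = 0 := by
      have h : F (R₀ * (W * W)) = trace (diagonal μ * (S * S)) := by
        rw [hTr, hspec, hWQ, conj_mul hQ1, conj_mul hQ1, conj_trace hQ1]
      rw [← h, hFW]
    have hexp : trace (diagonal μ * (S * S)) = ∑ k, ∑ l, μ k * (S k l * S l k) := by
      have h1 : trace (diagonal μ * (S * S)) = ∑ k, μ k * (S * S) k k := by
        simp [Matrix.trace, Matrix.diag, Matrix.diagonal_mul]
      rw [h1]
      refine Finset.sum_congr rfl fun k _ => ?_
      rw [Matrix.mul_apply, Finset.mul_sum]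
    have h : ∑ k, ∑ l, (μ k + μ l) * S k l ^ 2
        = -2 * ∑ k, ∑ l, μ k * (S k l * S l k) := by
      have hswap : ∑ k, ∑ l, μ l * S k l ^ 2 = ∑ k, ∑ l, μ k * S k l ^ 2 := by
        rw [Finset.sum_comm]
        refine Finset.sum_congr rfl fun k _ => Finset.sum_congr rfl fun l _ => ?_
        rw [hSanti k l]; ring
      have hs1 : ∀ k, ∑ l, (μ k + μ l) * S k l ^ 2
          = ∑ l, μ k * S k l ^ 2 + ∑ l, μ l * S k l ^ 2 := by
        intro k
        rw [← Finset.sum_add_distrib]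
        exact Finset.sum_congr rfl fun l _ => by ring
      rw [Finset.sum_congr rfl fun k _ => hs1 k, Finset.sum_add_distrib, hswap,
        ← Finset.sum_add_distrib, Finset.mul_sum]
      refine Finset.sum_congr rfl fun k _ => ?_
      rw [← Finset.sum_add_distrib, Finset.mul_sum]
      refine Finset.sum_congr rfl fun l _ => ?_
      rw [hSanti k l]; ring
    rw [h, ← hexp, htr0, mul_zero]
  -- each term vanishes
  have hterm : ∀ k l, (μ k + μ l) * S k l = 0 := by
    have hnn : ∀ k ∈ Finset.univ, ∀ l ∈ (Finset.univ : Finset (Fin n)),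
        (0:ℝ) ≤ (μ k + μ l) * S k l ^ 2 := by
      intro k _ l _
      rcases eq_or_ne k l with rfl | hkl
      · rw [hSdiag k]; simp
      · exact mul_nonneg (hpair k l hkl) (sq_nonneg _)
    have h1 : ∀ k ∈ (Finset.univ : Finset (Fin n)),
        (0:ℝ) ≤ ∑ l, (μ k + μ l) * S k l ^ 2 :=
      fun k hk => Finset.sum_nonneg (hnn k hk)
    have h2 := (Finset.sum_eq_zero_iff_of_nonneg h1).mp hzero
    intro k l
    have h3 := (Finset.sum_eq_zero_iff_of_nonneg (hnn k (Finset.mem_univ k))).mp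
      (h2 k (Finset.mem_univ k)) l (Finset.mem_univ l)
    rcases mul_eq_zero.mp h3 with h | h
    · rw [h, zero_mul]
    · rw [pow_eq_zero_iff (two_ne_zero)] at h
      rw [h, mul_zero]
  -- anticommutation
  have hanti : M * W = -(W * M) := by
    have hDS : diagonal μ * S = -(S * diagonal μ) := by
      ext k l
      simp only [Matrix.neg_apply, Matrix.diagonal_mul, Matrix.mul_diagonal]
      linear_combination hterm k l
    have h1 : M * W = Q * (diagonal μ * S) * Qᵀ := by
      rw [hspec, hWQ, conj_mul hQ1]
    have h2 : W * M = Q * (S * diagonal μ) * Qᵀ := by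
      rw [hspec, hWQ, conj_mul hQ1]
    rw [h1, h2, hDS, Matrix.mul_neg, Matrix.neg_mul]
  -- all traces of M * W^k vanish
  have htrk : ∀ k : ℕ, 1 ≤ k → trace (M * W ^ k) = 0 := by
    intro k hk
    obtain ⟨m, rfl⟩ := Nat.exists_eq_add_of_le hk
    have hcalc : trace (M * W ^ (1 + m)) = -trace (M * W ^ (1 + m)) := by
      calc trace (M * W ^ (1 + m)) = trace ((M * W) * W ^ m) := by
              rw [pow_add, pow_one, ← Matrix.mul_assoc]
        _ = -trace (W * (M * W ^ m)) := by
              rw [hanti, Matrix.neg_mul, trace_neg, Matrix.mul_assoc]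
        _ = -trace ((M * W ^ m) * W) := by rw [trace_mul_comm]
        _ = -trace (M * W ^ (1 + m)) := by
              rw [Matrix.mul_assoc, ← pow_succ, add_comm]
    linarith
  -- conclusion
  intro t
  have hskew : (t • W)ᵀ = -(t • W) := by
    rw [transpose_smul, hW, smul_neg]
  have hmemSO : R₀ * NormedSpace.exp (t • W) ∈ SO n :=
    SO_mul hR₀ (exp_skew_mem_SO hskew)
  set Φ : Matrix (Fin n) (Fin n) ℝ →ₗ[ℝ] ℝ := F ∘ₗ LinearMap.mulLeft ℝ R₀ with hΦdef
  have hΦ : ∀ A, Φ A = F (R₀ * A) := fun A => rfl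
  have h0 : ∀ k : ℕ, 1 ≤ k → Φ (W ^ k) = 0 := by
    intro k hk
    rw [hΦ, hTr]
    exact htrk k hk
  have hconst : F (R₀ * NormedSpace.exp (t • W)) = F R₀ := by
    have h := F_exp Φ W h0 t
    rw [hΦ, hΦ, mul_one] at h
    exact h
  exact ⟨hmemSO, fun R hR => (hmax R hR).trans hconst.ge⟩
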